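/- Let ‖·‖ be a norm on ℝ², let c₁, c₂ ∈ ℝ², set d := ‖c₁ − c₂‖ and D := {x ∈ ℝ² : ‖x − c₁‖ ≤ d and ‖x − c₂‖ ≤ d}. Then D can be written as the union of two sets D₁ and D₂ such that any two points of D₁ are at distance at most d and any two points of D₂ are at distance at most d (in the norm ‖·‖). -/

import Mathlib

private lemma lens_core (α β s t : ℝ) (ht : 0 ≤ t) (hts : t ≤ s) (hs : 0 < s) :
    (∃ l m : ℝ, 0 ≤ l ∧ l ≤ 1 ∧ 0 ≤ m ∧ m ≤ 1 ∧
      (1-l)*α = (1-m)*β + m ∧ (1-l)*s = (1-m)*t) ∨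
    (∃ l m : ℝ, 0 ≤ l ∧ l ≤ 1 ∧ 0 ≤ m ∧ m ≤ 1 ∧
      (1-l)*α + l = (1-m)*β ∧ (1-l)*s = (1-m)*t) ∨
    (∃ p r : ℝ, 0 ≤ p ∧ 0 ≤ r ∧ p + r ≤ 1 ∧ β = p*α + r ∧ t = p*s) := by
  rcases le_or_gt (β*s) (α*t) with h1 | h1
  · left
    have hDns : s ≤ α*t - β*s + s := by linarith
    have hDpos : (0:ℝ) < α*t - β*s + s := lt_of_lt_of_le hs hDns
    refine ⟨1 - t/(α*t - β*s + s), 1 - s/(α*t - β*s + s), ?_, ?_, ?_, ?_, ?_, ?_⟩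
    · have : t / (α*t - β*s + s) ≤ 1 := by
        rw [div_le_one hDpos]; linarith
      linarith
    · have : 0 ≤ t / (α*t - β*s + s) := div_nonneg ht hDpos.le
      linarith
    · have : s / (α*t - β*s + s) ≤ 1 := by
        rw [div_le_one hDpos]; linarith
      linarith
    · have : 0 ≤ s / (α*t - β*s + s) := div_nonneg hs.le hDpos.le
      linarith
    · simp only [sub_sub_cancel]
      rw [div_mul_eq_mul_div, div_mul_eq_mul_div, one_sub_div hDpos.ne', ← add_div, div_left_inj' hDpos.ne']
      ring
    · field_simp
      ring
  · rcases le_or_gt ((α-1)*t) ((β-1)*s) with h2 | h2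
    · right; left
      have hDns : s ≤ β*s - α*t + t := by linarith
      have hDpos : (0:ℝ) < β*s - α*t + t := lt_of_lt_of_le hs hDns
      refine ⟨1 - t/(β*s - α*t + t), 1 - s/(β*s - α*t + t), ?_, ?_, ?_, ?_, ?_, ?_⟩
      · have : t / (β*s - α*t + t) ≤ 1 := by
          rw [div_le_one hDpos]; linarith
        linarith
      · have : 0 ≤ t / (β*s - α*t + t) := div_nonneg ht hDpos.le
        linarith
      · have : s / (β*s - α*t + t) ≤ 1 := by
          rw [div_le_one hDpos]; linarith
        linarith
      · have : 0 ≤ s / (β*s - α*t + t) := div_nonneg hs.le hDpos.le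
        linarith
      · simp only [sub_sub_cancel]
        rw [div_mul_eq_mul_div, div_mul_eq_mul_div, one_sub_div hDpos.ne', ← add_div, div_left_inj' hDpos.ne']
        ring
      · field_simp
        ring
    · right; right
      refine ⟨t/s, β - α*t/s, ?_, ?_, ?_, ?_, ?_⟩
      · exact div_nonneg ht hs.le
      · have : α*t/s < β := by
          rw [div_lt_iff₀ hs]; linarith
        linarith
      · have hnum : t - α*t + β*s - s ≤ 0 := by nlinarith
        have h3 : t/s + (β - α*t/s) - 1 = (t - α*t + β*s - s)/s := by
          field_simp; ring
        have h4 : (t - α*t + β*s - s)/s ≤ 0 := div_nonpos_of_nonpos_of_nonneg hnum hs.le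
        linarith [h3 ▸ h4]
      · field_simp
        ring
      · field_simp

private lemma lens_affine_cases (α β s t : ℝ) (hs : 0 ≤ s) (ht : 0 ≤ t) :
    (∃ l m : ℝ, 0 ≤ l ∧ l ≤ 1 ∧ 0 ≤ m ∧ m ≤ 1 ∧
      (1-l)*α = (1-m)*β + m ∧ (1-l)*s = (1-m)*t) ∨
    (∃ l m : ℝ, 0 ≤ l ∧ l ≤ 1 ∧ 0 ≤ m ∧ m ≤ 1 ∧
      (1-l)*α + l = (1-m)*β ∧ (1-l)*s = (1-m)*t) ∨
    (∃ p r : ℝ, 0 ≤ p ∧ 0 ≤ r ∧ p + r ≤ 1 ∧ β = p*α + r ∧ t = p*s) ∨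
    (∃ p r : ℝ, 0 ≤ p ∧ 0 ≤ r ∧ p + r ≤ 1 ∧ α = p*β + r ∧ s = p*t) := by
  rcases lt_or_ge t s with hts | hst
  · -- t < s, so s > 0
    have hs' : 0 < s := lt_of_le_of_lt ht hts
    rcases lens_core α β s t ht hts.le hs' with h | h | h
    · exact Or.inl h
    · exact Or.inr (Or.inl h)
    · exact Or.inr (Or.inr (Or.inl h))
  · -- s ≤ t
    rcases lt_or_ge 0 t with ht' | ht'
    · rcases lens_core β α t s hs hst ht' with ⟨l,m,h0,h1,h2,h3,e1,e2⟩ | ⟨l,m,h0,h1,h2,h3,e1,e2⟩ | ⟨p,r,h0,h1,h2,e1,e2⟩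
      · exact Or.inr (Or.inl ⟨m, l, h2, h3, h0, h1, e1.symm, e2.symm⟩)
      · exact Or.inl ⟨m, l, h2, h3, h0, h1, e1.symm, e2.symm⟩
      · exact Or.inr (Or.inr (Or.inr ⟨p, r, h0, h1, h2, e1, e2⟩))
    · -- t ≤ 0 so t = 0, and s ≤ t = 0, so s = 0
      have ht0 : t = 0 := le_antisymm ht' ht
      have hs0 : s = 0 := le_antisymm (ht0 ▸ hst) hs
      subst ht0 hs0
      rcases lt_or_ge β 0 with hβ | hβ
      · left
        have hβ1 : β - 1 < 0 := by linarith
        refine ⟨1, β/(β-1), ?_, ?_, ?_, ?_, ?_, ?_⟩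
        · exact zero_le_one
        · exact le_refl 1
        · exact div_nonneg_of_nonpos hβ.le hβ1.le
        · rw [div_le_one_of_neg hβ1]
          linarith
        · have hne : β - 1 ≠ 0 := hβ1.ne
          field_simp; ring
        · ring
      · rcases le_or_gt β 1 with hβ1 | hβ1
        · right; right; left
          exact ⟨0, β, le_refl 0, hβ, by linarith, by ring, by ring⟩
        · right; left
          have hβ0 : β ≠ 0 := by linarith
          refine ⟨1, 1 - 1/β, ?_, ?_, ?_, ?_, ?_, ?_⟩
          · exact zero_le_one
          · exact le_refl 1
          · have : 1/β ≤ 1 := by rw [div_le_one (by linarith)]; linarith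
            linarith
          · have : 0 < 1/β := by positivity
            linarith
          · field_simp; ring
          · ring

private lemma lens_nrm_neg (nrm : (ℝ × ℝ) → ℝ)
    (h_smul : ∀ (a : ℝ) (x : ℝ × ℝ), nrm (a • x) = |a| * nrm x)
    (z : ℝ × ℝ) : nrm (-z) = nrm z := by
  simpa using h_smul (-1) z

private lemma lens_nrm_nonneg (nrm : (ℝ × ℝ) → ℝ)
    (h_add : ∀ x y : ℝ × ℝ, nrm (x + y) ≤ nrm x + nrm y)
    (h_smul : ∀ (a : ℝ) (x : ℝ × ℝ), nrm (a • x) = |a| * nrm x)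
    (z : ℝ × ℝ) : 0 ≤ nrm z := by
  have h0 : nrm 0 = 0 := by simpa using h_smul 0 0
  have h := h_add z (-z)
  rw [add_neg_cancel, h0, lens_nrm_neg nrm h_smul] at h
  linarith

private lemma lens_key (nrm : (ℝ × ℝ) → ℝ)
    (h_add : ∀ x y : ℝ × ℝ, nrm (x + y) ≤ nrm x + nrm y)
    (h_smul : ∀ (a : ℝ) (x : ℝ × ℝ), nrm (a • x) = |a| * nrm x)
    (c₁ c₂ v : ℝ × ℝ) (d : ℝ) (hd : d = nrm (c₁ - c₂))
    (x y : ℝ × ℝ)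
    (hx1 : nrm (x - c₁) ≤ d) (hx2 : nrm (x - c₂) ≤ d)
    (hy1 : nrm (y - c₁) ≤ d) (hy2 : nrm (y - c₂) ≤ d)
    (α s β t : ℝ) (hs : 0 ≤ s) (ht : 0 ≤ t)
    (hxe : x = c₁ + α • (c₂ - c₁) + s • v)
    (hye : y = c₁ + β • (c₂ - c₁) + t • v) :
    nrm (x - y) ≤ d := by
  have hd0 : 0 ≤ d := hd ▸ lens_nrm_nonneg nrm h_add h_smul _
  have hneg : ∀ a b : ℝ × ℝ, nrm (a - b) = nrm (b - a) := fun a b => by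
    rw [← lens_nrm_neg nrm h_smul (a - b), neg_sub]
  rcases lens_affine_cases α β s t hs ht with
    ⟨l,m,hl0,hl1,hm0,hm1,e1,e2⟩ | ⟨l,m,hl0,hl1,hm0,hm1,e1,e2⟩ |
    ⟨p,r,hp,hr,hpr,e1,e2⟩ | ⟨p,r,hp,hr,hpr,e1,e2⟩
  · -- segments [x,c₁] and [y,c₂] cross
    have hz : (1-l) • x + l • c₁ = (1-m) • y + m • c₂ := by
      rw [hxe, hye]
      apply Prod.ext <;> simp only [Prod.fst_add, Prod.snd_add, Prod.smul_fst, Prod.smul_snd,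
        Prod.fst_sub, Prod.snd_sub, smul_eq_mul]
      · linear_combination (c₂.1 - c₁.1) * e1 + v.1 * e2
      · linear_combination (c₂.2 - c₁.2) * e1 + v.2 * e2
    have hsplit : x - y = l • (x - c₁) + m • (c₂ - y) := by
      have h1 : x - y = (x - ((1-l) • x + l • c₁)) + (((1-m) • y + m • c₂) - y) := by
        rw [hz]; abel
      rw [h1]
      congr 1
      · apply Prod.ext <;> simp [smul_eq_mul] <;> ring
      · apply Prod.ext <;> simp [smul_eq_mul] <;> ring
    have hsplit2 : c₁ - c₂ = (1-l) • (c₁ - x) + (1-m) • (y - c₂) := by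
      have hz1 := congrArg Prod.fst hz
      have hz2 := congrArg Prod.snd hz
      simp only [Prod.fst_add, Prod.snd_add, Prod.smul_fst, Prod.smul_snd, smul_eq_mul] at hz1 hz2
      apply Prod.ext <;> simp only [Prod.fst_add, Prod.snd_add, Prod.smul_fst, Prod.smul_snd,
        Prod.fst_sub, Prod.snd_sub, smul_eq_mul]
      · linear_combination hz1
      · linear_combination hz2
    have b1 : nrm (x - y) ≤ l * nrm (x - c₁) + m * nrm (c₂ - y) := by
      rw [hsplit]
      calc nrm (l • (x - c₁) + m • (c₂ - y)) ≤ nrm (l • (x - c₁)) + nrm (m • (c₂ - y)) :=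
            h_add _ _
        _ = l * nrm (x - c₁) + m * nrm (c₂ - y) := by
            rw [h_smul, h_smul, abs_of_nonneg hl0, abs_of_nonneg hm0]
    have b2 : d ≤ (1-l) * nrm (x - c₁) + (1-m) * nrm (y - c₂) := by
      rw [hd, hsplit2]
      calc nrm ((1-l) • (c₁ - x) + (1-m) • (y - c₂))
          ≤ nrm ((1-l) • (c₁ - x)) + nrm ((1-m) • (y - c₂)) := h_add _ _
        _ = (1-l) * nrm (c₁ - x) + (1-m) * nrm (y - c₂) := by
            rw [h_smul, h_smul, abs_of_nonneg (by linarith), abs_of_nonneg (by linarith)]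
        _ = (1-l) * nrm (x - c₁) + (1-m) * nrm (y - c₂) := by rw [hneg c₁ x]
    have hc : nrm (c₂ - y) = nrm (y - c₂) := hneg _ _
    rw [hc] at b1
    linarith
  · -- segments [x,c₂] and [y,c₁] cross
    have hz : (1-l) • x + l • c₂ = (1-m) • y + m • c₁ := by
      rw [hxe, hye]
      apply Prod.ext <;> simp only [Prod.fst_add, Prod.snd_add, Prod.smul_fst, Prod.smul_snd,
        Prod.fst_sub, Prod.snd_sub, smul_eq_mul]
      · linear_combination (c₂.1 - c₁.1) * e1 + v.1 * e2
      · linear_combination (c₂.2 - c₁.2) * e1 + v.2 * e2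
    have hsplit : x - y = l • (x - c₂) + m • (c₁ - y) := by
      have h1 : x - y = (x - ((1-l) • x + l • c₂)) + (((1-m) • y + m • c₁) - y) := by
        rw [hz]; abel
      rw [h1]
      congr 1
      · apply Prod.ext <;> simp [smul_eq_mul] <;> ring
      · apply Prod.ext <;> simp [smul_eq_mul] <;> ring
    have hsplit2 : c₂ - c₁ = (1-l) • (c₂ - x) + (1-m) • (y - c₁) := by
      have hz1 := congrArg Prod.fst hz
      have hz2 := congrArg Prod.snd hz
      simp only [Prod.fst_add, Prod.snd_add, Prod.smul_fst, Prod.smul_snd, smul_eq_mul] at hz1 hz2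
      apply Prod.ext <;> simp only [Prod.fst_add, Prod.snd_add, Prod.smul_fst, Prod.smul_snd,
        Prod.fst_sub, Prod.snd_sub, smul_eq_mul]
      · linear_combination hz1
      · linear_combination hz2
    have b1 : nrm (x - y) ≤ l * nrm (x - c₂) + m * nrm (c₁ - y) := by
      rw [hsplit]
      calc nrm (l • (x - c₂) + m • (c₁ - y)) ≤ nrm (l • (x - c₂)) + nrm (m • (c₁ - y)) :=
            h_add _ _
        _ = l * nrm (x - c₂) + m * nrm (c₁ - y) := by
            rw [h_smul, h_smul, abs_of_nonneg hl0, abs_of_nonneg hm0]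
    have b2 : d ≤ (1-l) * nrm (x - c₂) + (1-m) * nrm (y - c₁) := by
      rw [hd, hneg c₁ c₂, hsplit2]
      calc nrm ((1-l) • (c₂ - x) + (1-m) • (y - c₁))
          ≤ nrm ((1-l) • (c₂ - x)) + nrm ((1-m) • (y - c₁)) := h_add _ _
        _ = (1-l) * nrm (c₂ - x) + (1-m) * nrm (y - c₁) := by
            rw [h_smul, h_smul, abs_of_nonneg (by linarith), abs_of_nonneg (by linarith)]
        _ = (1-l) * nrm (x - c₂) + (1-m) * nrm (y - c₁) := by rw [hneg c₂ x]
    have hc : nrm (c₁ - y) = nrm (y - c₁) := hneg _ _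
    rw [hc] at b1
    linarith
  · -- y ∈ conv {x, c₁, c₂}
    have hsplit : x - y = (1-p-r) • (x - c₁) + r • (x - c₂) := by
      rw [hxe, hye]
      apply Prod.ext <;> simp only [Prod.fst_add, Prod.snd_add, Prod.smul_fst, Prod.smul_snd,
        Prod.fst_sub, Prod.snd_sub, smul_eq_mul]
      · linear_combination -(c₂.1 - c₁.1) * e1 - v.1 * e2
      · linear_combination -(c₂.2 - c₁.2) * e1 - v.2 * e2
    calc nrm (x - y) = nrm ((1-p-r) • (x - c₁) + r • (x - c₂)) := by rw [hsplit]
      _ ≤ nrm ((1-p-r) • (x - c₁)) + nrm (r • (x - c₂)) := h_add _ _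
      _ = (1-p-r) * nrm (x - c₁) + r * nrm (x - c₂) := by
          rw [h_smul, h_smul, abs_of_nonneg (by linarith), abs_of_nonneg hr]
      _ ≤ (1-p-r) * d + r * d := by
          have h1 : 0 ≤ 1 - p - r := by linarith
          have := mul_le_mul_of_nonneg_left hx1 h1
          have := mul_le_mul_of_nonneg_left hx2 hr
          linarith
      _ = (1-p) * d := by ring
      _ ≤ d := by nlinarith
  · -- x ∈ conv {y, c₁, c₂}
    have hsplit : y - x = (1-p-r) • (y - c₁) + r • (y - c₂) := by
      rw [hxe, hye]
      apply Prod.ext <;> simp only [Prod.fst_add, Prod.snd_add, Prod.smul_fst, Prod.smul_snd,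
        Prod.fst_sub, Prod.snd_sub, smul_eq_mul]
      · linear_combination -(c₂.1 - c₁.1) * e1 - v.1 * e2
      · linear_combination -(c₂.2 - c₁.2) * e1 - v.2 * e2
    rw [hneg x y]
    calc nrm (y - x) = nrm ((1-p-r) • (y - c₁) + r • (y - c₂)) := by rw [hsplit]
      _ ≤ nrm ((1-p-r) • (y - c₁)) + nrm (r • (y - c₂)) := h_add _ _
      _ = (1-p-r) * nrm (y - c₁) + r * nrm (y - c₂) := by
          rw [h_smul, h_smul, abs_of_nonneg (by linarith), abs_of_nonneg hr]
      _ ≤ (1-p-r) * d + r * d := by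
          have h1 : 0 ≤ 1 - p - r := by linarith
          have := mul_le_mul_of_nonneg_left hy1 h1
          have := mul_le_mul_of_nonneg_left hy2 hr
          linarith
      _ = (1-p) * d := by ring
      _ ≤ d := by nlinarith

private lemma lens_decompA (c₁ u z : ℝ × ℝ) (hn : u.1^2 + u.2^2 ≠ 0) :
    z = c₁ + (((z.1 - c₁.1)*u.1 + (z.2 - c₁.2)*u.2)/(u.1^2 + u.2^2)) • u
          + (((z.2 - c₁.2)*u.1 - (z.1 - c₁.1)*u.2)/(u.1^2 + u.2^2)) • ((-u.2, u.1) : ℝ × ℝ) := by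
  apply Prod.ext <;>
    simp only [Prod.fst_add, Prod.snd_add, Prod.smul_fst, Prod.smul_snd, smul_eq_mul] <;>
    field_simp <;> ring

private lemma lens_decompB (c₁ u z : ℝ × ℝ) (hn : u.1^2 + u.2^2 ≠ 0) :
    z = c₁ + (((z.1 - c₁.1)*u.1 + (z.2 - c₁.2)*u.2)/(u.1^2 + u.2^2)) • u
          + (((z.1 - c₁.1)*u.2 - (z.2 - c₁.2)*u.1)/(u.1^2 + u.2^2)) • ((u.2, -u.1) : ℝ × ℝ) := by
  apply Prod.ext <;>
    simp only [Prod.fst_add, Prod.snd_add, Prod.smul_fst, Prod.smul_snd, smul_eq_mul] <;>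
    field_simp <;> ring

/-- The lens `D` is the union of two sets each of norm-diameter at most
`d = ‖c₁ - c₂‖`. -/
theorem lens_union_two_small_diameter_sets
    (nrm : (ℝ × ℝ) → ℝ)
    (h_add : ∀ x y : ℝ × ℝ, nrm (x + y) ≤ nrm x + nrm y)
    (h_smul : ∀ (a : ℝ) (x : ℝ × ℝ), nrm (a • x) = |a| * nrm x)
    (h_def : ∀ x : ℝ × ℝ, nrm x = 0 ↔ x = 0)
    (c₁ c₂ : ℝ × ℝ) (d : ℝ) (hd : d = nrm (c₁ - c₂))
    (D : Set (ℝ × ℝ))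
    (hD : D = {x | nrm (x - c₁) ≤ d ∧ nrm (x - c₂) ≤ d}) :
    ∃ D₁ D₂ : Set (ℝ × ℝ), D = D₁ ∪ D₂ ∧
      (∀ x ∈ D₁, ∀ y ∈ D₁, nrm (x - y) ≤ d) ∧
      (∀ x ∈ D₂, ∀ y ∈ D₂, nrm (x - y) ≤ d) := by
  have h0 : nrm 0 = 0 := by simpa using h_smul 0 0
  by_cases hc : c₁ = c₂
  · -- degenerate case: D = {c₁}
    have hd0 : d = 0 := by rw [hd, hc, sub_self, h0]
    have hpt : ∀ z ∈ D, z = c₁ := by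
      intro z hz
      rw [hD] at hz
      have h1 : nrm (z - c₁) ≤ d := hz.1
      have h2 : 0 ≤ nrm (z - c₁) := lens_nrm_nonneg nrm h_add h_smul _
      have h3 : nrm (z - c₁) = 0 := le_antisymm (by linarith) h2
      have h4 := (h_def _).mp h3
      exact sub_eq_zero.mp h4
    have hb : ∀ x ∈ D, ∀ y ∈ D, nrm (x - y) ≤ d := by
      intro x hx y hy
      rw [hpt x hx, hpt y hy, sub_self, h0, hd0]
    exact ⟨D, D, (Set.union_self D).symm, hb, hb⟩
  · have hu : c₂ - c₁ ≠ 0 := sub_ne_zero.mpr (Ne.symm hc)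
    set u : ℝ × ℝ := c₂ - c₁ with hu_def
    have hn : u.1^2 + u.2^2 ≠ 0 := by
      intro h
      apply hu
      have h1 : u.1 = 0 := by nlinarith [sq_nonneg u.1, sq_nonneg u.2]
      have h2 : u.2 = 0 := by nlinarith [sq_nonneg u.1, sq_nonneg u.2]
      exact Prod.ext h1 h2
    have hnpos : (0:ℝ) ≤ u.1^2 + u.2^2 := by positivity
    refine ⟨{z ∈ D | 0 ≤ (z.2 - c₁.2)*u.1 - (z.1 - c₁.1)*u.2},
            {z ∈ D | (z.2 - c₁.2)*u.1 - (z.1 - c₁.1)*u.2 ≤ 0}, ?_, ?_, ?_⟩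
    · ext z
      simp only [Set.mem_union, Set.mem_setOf_eq, Set.mem_sep_iff]
      constructor
      · intro hz
        rcases le_total 0 ((z.2 - c₁.2)*u.1 - (z.1 - c₁.1)*u.2) with h | h
        · exact Or.inl ⟨hz, h⟩
        · exact Or.inr ⟨hz, h⟩
      · rintro (⟨hz, -⟩ | ⟨hz, -⟩) <;> exact hz
    · -- D₁ bound
      rintro x ⟨hxD, hxσ⟩ y ⟨hyD, hyσ⟩
      rw [hD] at hxD hyD
      exact lens_key nrm h_add h_smul c₁ c₂ ((-u.2, u.1) : ℝ × ℝ) d hd x y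
        hxD.1 hxD.2 hyD.1 hyD.2
        _ _ _ _
        (div_nonneg hxσ hnpos) (div_nonneg hyσ hnpos)
        (lens_decompA c₁ u x hn) (lens_decompA c₁ u y hn)
    · -- D₂ bound
      rintro x ⟨hxD, hxσ⟩ y ⟨hyD, hyσ⟩
      rw [hD] at hxD hyD
      exact lens_key nrm h_add h_smul c₁ c₂ ((u.2, -u.1) : ℝ × ℝ) d hd x y
        hxD.1 hxD.2 hyD.1 hyD.2
        _ _ _ _
        (div_nonneg (by linarith) hnpos) (div_nonneg (by linarith) hnpos)
        (lens_decompB c₁ u x hn) (lens_decompB c₁ u y hn)
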